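/- Let n = 2 and let an unambiguous complete product basis on ℂ^{d_1} ⊗ ℂ^{d_2} be given. Then at least one party's setting label is the same in all events: there exist k ∈ {1,2} and x_k^0 ∈ X_k such that x_k^j = x_k^0 for every event j (one-way no-signaling: the corresponding component of the induced function is constant). -/

import Mathlib

noncomputable section
open scoped BigOperators

/-- **No bipartite unambiguous QNLWE basis**: for `n = 2`, in any unambiguous
complete product basis at least one party's setting label is the same in all
events (one-way no-signaling: the corresponding component of the induced
function is constant). -/
theorem bipartite_unambiguous_basis_one_way_no_signaling
    -- two parties with local dimensions `d k`
    (d : Fin 2 → ℕ) (hd : ∀ k, 1 ≤ d k)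
    -- outcome sets `A k` with `|A k| = d k`, finite nonempty setting sets `X k`
    (A : Fin 2 → Type) [∀ k, Fintype (A k)] [∀ k, DecidableEq (A k)]
    (hA : ∀ k, Fintype.card (A k) = d k)
    (X : Fin 2 → Type) [∀ k, Fintype (X k)] [∀ k, Nonempty (X k)]
    [∀ k, DecidableEq (X k)]
    -- local vectors `|(a_k|x_k)⟩`, an orthonormal basis for each setting
    (v : ∀ k : Fin 2, X k → A k → EuclideanSpace ℂ (Fin (d k)))
    (hv : ∀ (k : Fin 2) (x : X k), Orthonormal ℂ (v k x))
    -- `N = ∏_k d_k` pairwise distinct events with pairwise orthogonal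
    -- product vectors (a complete product basis)
    {N : ℕ} (hN : N = ∏ k, d k)
    (e : Fin N → (∀ k, A k) × (∀ k, X k))
    (he : Function.Injective e)
    (horth : ∀ j j' : Fin N, j ≠ j' →
      (∏ k : Fin 2,
        (inner ℂ (v k ((e j).2 k) ((e j).1 k))
          (v k ((e j').2 k) ((e j').1 k)) : ℂ)) = 0)
    -- unambiguity
    (hunamb : ∀ (k : Fin 2) (a a' : A k) (x x' : X k),
      (∃ j, (e j).1 k = a ∧ (e j).2 k = x) →
      (∃ j, (e j).1 k = a' ∧ (e j).2 k = x') →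
      v k x a ≠ v k x' a' →
      ((inner ℂ (v k x a) (v k x' a') : ℂ) = 0 ↔ x = x')) :
    ∃ (k : Fin 2) (x0 : X k), ∀ j : Fin N, (e j).2 k = x0 := by

  classical
  have hnormone : ∀ (k : Fin 2) (x : X k) (a : A k),
      (inner ℂ (v k x a) (v k x a) : ℂ) ≠ 0 := by
    intro k x a
    have h1 : ‖v k x a‖ = 1 := (hv k x).1 a
    rw [inner_self_eq_norm_sq_to_K, h1]
    norm_num
  have key : ∀ j j' : Fin N, (e j).2 0 ≠ (e j').2 0 → (e j).2 1 = (e j').2 1 := by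
    intro j j' hx
    have hjj : j ≠ j' := fun h => hx (by rw [h])
    have h0 := horth j j' hjj
    rw [Fin.prod_univ_two] at h0
    have h1 : (inner ℂ (v 0 ((e j).2 0) ((e j).1 0))
        (v 0 ((e j').2 0) ((e j').1 0)) : ℂ) ≠ 0 := by
      by_cases hveq : v 0 ((e j).2 0) ((e j).1 0) = v 0 ((e j').2 0) ((e j').1 0)
      · rw [hveq]; exact hnormone 0 _ _
      · have h := hunamb 0 ((e j).1 0) ((e j').1 0) ((e j).2 0) ((e j').2 0)
          ⟨j, rfl, rfl⟩ ⟨j', rfl, rfl⟩ hveq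
        exact fun hz => hx (h.mp hz)
    have h2 : (inner ℂ (v 1 ((e j).2 1) ((e j).1 1))
        (v 1 ((e j').2 1) ((e j').1 1)) : ℂ) = 0 := by
      rcases mul_eq_zero.mp h0 with h | h
      · exact absurd h h1
      · exact h
    by_cases hveq : v 1 ((e j).2 1) ((e j).1 1) = v 1 ((e j').2 1) ((e j').1 1)
    · rw [hveq] at h2; exact absurd h2 (hnormone 1 _ _)
    · exact (hunamb 1 ((e j).1 1) ((e j').1 1) ((e j).2 1) ((e j').2 1)
        ⟨j, rfl, rfl⟩ ⟨j', rfl, rfl⟩ hveq).mp h2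
  by_cases hconst : ∀ j j' : Fin N, (e j).2 0 = (e j').2 0
  · have hNpos : 0 < N := by
      rw [hN]
      exact Finset.prod_pos fun k _ => hd k
    exact ⟨0, (e ⟨0, hNpos⟩).2 0, fun j => hconst j ⟨0, hNpos⟩⟩
  · push_neg at hconst
    obtain ⟨j0, j1, h01⟩ := hconst
    refine ⟨1, (e j0).2 1, fun j => ?_⟩
    by_cases h : (e j).2 0 = (e j0).2 0
    · have h' : (e j).2 0 ≠ (e j1).2 0 := h ▸ h01
      rw [key j j1 h', ← key j0 j1 h01]
    · exact key j j0 h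

end
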